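/- Let M, N be nests on H. For any P ∈ M and Q ∈ N, with Q₊ denoting the successor projection of Q in N, the Kadison–Kastler distance satisfies d(T(M), T(N)) ≥ ‖Pᗮ Q₊‖ · ‖P Qᗮ‖. -/

import Mathlib

open ContinuousLinearMap

/-- A nest on a Hilbert space: a chain of orthogonal projections containing `0` and `1`,
closed under arbitrary intersections (infima of ranges) and closed spans (closures of
suprema of ranges). -/
structure IsNest {H : Type*} [NormedAddCommGroup H] [InnerProductSpace ℂ H]
    [CompleteSpace H] (𝒩 : Set (H →L[ℂ] H)) : Prop where
  selfAdjoint : ∀ P ∈ 𝒩, IsSelfAdjoint P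
  idem : ∀ P ∈ 𝒩, P ∘L P = P
  chain : ∀ P ∈ 𝒩, ∀ Q ∈ 𝒩, Q ∘L P = P ∨ P ∘L Q = Q
  zero_mem : 0 ∈ 𝒩
  one_mem : 1 ∈ 𝒩
  inf_mem : ∀ S ⊆ 𝒩, ∃ P ∈ 𝒩, LinearMap.range (P : H →ₗ[ℂ] H) = ⨅ Q ∈ S, LinearMap.range (Q : H →ₗ[ℂ] H)
  sup_mem : ∀ S ⊆ 𝒩, ∃ P ∈ 𝒩,
    LinearMap.range (P : H →ₗ[ℂ] H) = (⨆ Q ∈ S, LinearMap.range (Q : H →ₗ[ℂ] H)).topologicalClosure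

/-- The nest algebra of a nest `𝒩`: all operators leaving every subspace of the nest
invariant, i.e. `(1 - P) A P = 0` for all `P ∈ 𝒩`. -/
def nestAlg {H : Type*} [NormedAddCommGroup H] [InnerProductSpace ℂ H]
    [CompleteSpace H] (𝒩 : Set (H →L[ℂ] H)) : Set (H →L[ℂ] H) :=
  {A | ∀ P ∈ 𝒩, (1 - P) ∘L A ∘L P = 0}

/-- The Kadison–Kastler distance between two sets of operators:
`max (sup_{A ∈ b₁(𝒜)} d(A, ℬ)) (sup_{B ∈ b₁(ℬ)} d(B, 𝒜))`. -/
noncomputable def kkDist {H : Type*} [NormedAddCommGroup H] [InnerProductSpace ℂ H]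
    [CompleteSpace H] (𝒜 ℬ : Set (H →L[ℂ] H)) : ℝ :=
  max (⨆ T : {T : H →L[ℂ] H // T ∈ 𝒜 ∧ ‖T‖ ≤ 1}, Metric.infDist T.1 ℬ)
      (⨆ T : {T : H →L[ℂ] H // T ∈ ℬ ∧ ‖T‖ ≤ 1}, Metric.infDist T.1 𝒜)

open scoped InnerProductSpace


private lemma sq_le_mul_aux {t s : ℝ} (ht : 0 ≤ t) (hs : 0 ≤ s) (h : t ^ 2 ≤ s * t) : t ≤ s := by
  rcases ht.eq_or_lt with h0 | h0
  · linarith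
  · have : t * t ≤ s * t := by nlinarith
    exact le_of_mul_le_mul_right this h0

private lemma proj_apply_norm_le {H : Type*} [NormedAddCommGroup H] [InnerProductSpace ℂ H]
    [CompleteSpace H] (R : H →L[ℂ] H) (hsa : IsSelfAdjoint R) (hid : R ∘L R = R) (x : H) :
    ‖R x‖ ≤ ‖x‖ := by
  have hadj : ContinuousLinearMap.adjoint R = R := ContinuousLinearMap.isSelfAdjoint_iff'.mp hsa
  have hRR : R (R x) = R x := by
    conv_lhs => rw [← ContinuousLinearMap.comp_apply, hid]
  have key : (‖R x‖ : ℝ) ^ 2 = RCLike.re (⟪x, R x⟫_ℂ) := by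
    rw [← inner_self_eq_norm_sq (𝕜 := ℂ) (R x)]
    congr 1
    calc ⟪R x, R x⟫_ℂ = ⟪(ContinuousLinearMap.adjoint R) x, R x⟫_ℂ := by rw [hadj]
      _ = ⟪x, R (R x)⟫_ℂ := ContinuousLinearMap.adjoint_inner_left R (R x) x
      _ = ⟪x, R x⟫_ℂ := by rw [hRR]
  have h2 : RCLike.re (⟪x, R x⟫_ℂ) ≤ ‖x‖ * ‖R x‖ := by
    calc RCLike.re (⟪x, R x⟫_ℂ) ≤ ‖⟪x, R x⟫_ℂ‖ := RCLike.re_le_norm _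
      _ ≤ ‖x‖ * ‖R x‖ := norm_inner_le_norm _ _
  exact sq_le_mul_aux (norm_nonneg _) (norm_nonneg _) (key ▸ h2)

private lemma mul_opNorm_le_aux {H : Type*} [NormedAddCommGroup H] [InnerProductSpace ℂ H]
    [CompleteSpace H] (A B : H →L[ℂ] H) (c : ℝ) (hc : 0 ≤ c)
    (h : ∀ x y : H, ‖x‖ ≤ 1 → ‖y‖ ≤ 1 → ‖A x‖ * ‖B y‖ ≤ c) : ‖A‖ * ‖B‖ ≤ c := by
  refine le_of_forall_lt fun r hr => ?_
  rcases lt_or_ge r 0 with h0 | h0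
  · exact lt_of_lt_of_le h0 hc
  · have hB : 0 < ‖B‖ := by
      by_contra hB
      push_neg at hB
      have : ‖B‖ = 0 := le_antisymm hB (norm_nonneg _)
      rw [this, mul_zero] at hr
      exact absurd hr (not_lt.mpr h0)
    have hA : 0 < ‖A‖ := by
      by_contra hA
      push_neg at hA
      have : ‖A‖ = 0 := le_antisymm hA (norm_nonneg _)
      rw [this, zero_mul] at hr
      exact absurd hr (not_lt.mpr h0)
    have hdiv : max (r / ‖B‖) 0 < ‖A‖ := by
      refine max_lt ?_ hA
      rwa [div_lt_iff₀ hB]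
    obtain ⟨r1, hr1l, hr1r⟩ := exists_between hdiv
    have hr1pos : 0 < r1 := lt_of_le_of_lt (le_max_right _ _) hr1l
    obtain ⟨x, hx1, hxA⟩ := A.exists_lt_apply_of_lt_opNorm hr1r
    have hdivb : r / r1 < ‖B‖ := by
      rw [div_lt_iff₀ hr1pos]
      have : r / ‖B‖ < r1 := lt_of_le_of_lt (le_max_left _ _) hr1l
      rw [div_lt_iff₀ hB] at this
      linarith [this]
    obtain ⟨y, hy1, hyB⟩ := B.exists_lt_apply_of_lt_opNorm hdivb
    have h1 : r < r1 * ‖B y‖ := by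
      rw [← div_lt_iff₀' hr1pos]
      exact hyB
    have h2 : r1 * ‖B y‖ ≤ ‖A x‖ * ‖B y‖ :=
      mul_le_mul_of_nonneg_right hxA.le (norm_nonneg _)
    exact lt_of_lt_of_le (lt_of_lt_of_le h1 h2) (h x y hx1.le hy1.le)


private lemma sa_inner {H : Type*} [NormedAddCommGroup H] [InnerProductSpace ℂ H]
    [CompleteSpace H] {R : H →L[ℂ] H} (hsa : IsSelfAdjoint R) (x y : H) :
    ⟪R x, y⟫_ℂ = ⟪x, R y⟫_ℂ := by
  have hadj : ContinuousLinearMap.adjoint R = R := ContinuousLinearMap.isSelfAdjoint_iff'.mp hsa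
  calc ⟪R x, y⟫_ℂ = ⟪(ContinuousLinearMap.adjoint R) x, y⟫_ℂ := by rw [hadj]
    _ = ⟪x, R y⟫_ℂ := ContinuousLinearMap.adjoint_inner_left R y x

private lemma zero_mem_nestAlg {H : Type*} [NormedAddCommGroup H] [InnerProductSpace ℂ H]
    [CompleteSpace H] (𝒩 : Set (H →L[ℂ] H)) : (0 : H →L[ℂ] H) ∈ nestAlg 𝒩 := by
  intro R hR
  ext z
  simp

/-- Lower bound for the Kadison–Kastler distance between nest algebras: for `P ∈ 𝒨`,
`Q ∈ 𝒩` with successor `Q₊` of `Q` in `𝒩`,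
`‖Pᗮ Q₊‖ ⬝ ‖P Qᗮ‖ ≤ d(𝒯(𝒨), 𝒯(𝒩))`. -/

theorem stmt14 {H : Type*} [NormedAddCommGroup H] [InnerProductSpace ℂ H]
    [CompleteSpace H]
    (𝒨 𝒩 : Set (H →L[ℂ] H)) (hM : IsNest 𝒨) (hN : IsNest 𝒩)
    (P Q Qp : H →L[ℂ] H) (hP : P ∈ 𝒨) (hQ : Q ∈ 𝒩) (hQp : Qp ∈ 𝒩)
    (hQle : Qp ∘L Q = Q)
    (hsucc : ∀ Q' ∈ 𝒩, Q' ∘L Q = Q → Q' ≠ Q → Q' ∘L Qp = Qp) :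
    ‖(1 - P) ∘L Qp‖ * ‖P ∘L (1 - Q)‖ ≤ kkDist (nestAlg 𝒨) (nestAlg 𝒩) := by
  classical
  have hQsa := hN.selfAdjoint Q hQ
  have hQid := hN.idem Q hQ
  have hPsa := hM.selfAdjoint P hP
  have hPid := hM.idem P hP
  have hQpsa := hN.selfAdjoint Qp hQp
  have hQpid := hN.idem Qp hQp
  have h1Psa : IsSelfAdjoint ((1 : H →L[ℂ] H) - P) := (IsSelfAdjoint.one (R := H →L[ℂ] H)).sub hPsa
  have h1Pid : ((1 : H →L[ℂ] H) - P) ∘L ((1 : H →L[ℂ] H) - P) = 1 - P := by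
    ext z
    have : P (P z) = P z := by
      conv_lhs => rw [← ContinuousLinearMap.comp_apply, hPid]
    simp [ContinuousLinearMap.comp_apply, ContinuousLinearMap.sub_apply, map_sub, this]
  have h1Qsa : IsSelfAdjoint ((1 : H →L[ℂ] H) - Q) := (IsSelfAdjoint.one (R := H →L[ℂ] H)).sub hQsa
  have h1Qid : ((1 : H →L[ℂ] H) - Q) ∘L ((1 : H →L[ℂ] H) - Q) = 1 - Q := by
    ext z
    have : Q (Q z) = Q z := by
      conv_lhs => rw [← ContinuousLinearMap.comp_apply, hQid]
    simp [ContinuousLinearMap.comp_apply, ContinuousLinearMap.sub_apply, map_sub, this]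
  have h0M : (0 : H →L[ℂ] H) ∈ nestAlg 𝒨 := zero_mem_nestAlg 𝒨
  have h0N : (0 : H →L[ℂ] H) ∈ nestAlg 𝒩 := zero_mem_nestAlg 𝒩
  have hneM : (nestAlg 𝒨).Nonempty := ⟨0, h0M⟩
  -- boundedness of the sup over the unit ball of nestAlg 𝒩
  have hbdd : BddAbove (Set.range fun T : {T : H →L[ℂ] H // T ∈ nestAlg 𝒩 ∧ ‖T‖ ≤ 1} =>
      Metric.infDist T.1 (nestAlg 𝒨)) := by
    refine ⟨1, ?_⟩
    rintro r ⟨T, rfl⟩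
    calc Metric.infDist T.1 (nestAlg 𝒨) ≤ dist T.1 0 := Metric.infDist_le_dist_of_mem h0M
      _ = ‖T.1‖ := by simp
      _ ≤ 1 := T.2.2
  -- any infDist of a unit-ball element of nestAlg 𝒩 is a lower bound for kkDist
  have hkk_ge : ∀ T : H →L[ℂ] H, T ∈ nestAlg 𝒩 → ‖T‖ ≤ 1 →
      Metric.infDist T (nestAlg 𝒨) ≤ kkDist (nestAlg 𝒨) (nestAlg 𝒩) := by
    intro T hT hT1
    have := le_ciSup hbdd (⟨T, hT, hT1⟩ : {T : H →L[ℂ] H // T ∈ nestAlg 𝒩 ∧ ‖T‖ ≤ 1})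
    exact this.trans (le_max_right _ _)
  have hkk0 : 0 ≤ kkDist (nestAlg 𝒨) (nestAlg 𝒩) :=
    le_trans (Metric.infDist_nonneg) (hkk_ge 0 h0N (by simp))
  refine mul_opNorm_le_aux _ _ _ hkk0 ?_
  intro x y hx hy
  set ζ : H := Qp x with hζdef
  set η : H := ((1 : H →L[ℂ] H) - Q) y with hηdef
  have hζn : ‖ζ‖ ≤ 1 := (proj_apply_norm_le Qp hQpsa hQpid x).trans hx
  have hηn : ‖η‖ ≤ 1 := (proj_apply_norm_le _ h1Qsa h1Qid y).trans hy
  have hQη : Q η = 0 := by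
    have : Q (Q y) = Q y := by
      conv_lhs => rw [← ContinuousLinearMap.comp_apply, hQid]
    simp [hηdef, map_sub, this]
  have hQpζ : Qp ζ = ζ := by
    rw [hζdef, ← ContinuousLinearMap.comp_apply, hQpid]
  set T : H →L[ℂ] H := (innerSL ℂ η).smulRight ζ with hTdef
  have hTapp : ∀ z : H, T z = ⟪η, z⟫_ℂ • ζ := fun z => rfl
  have hT1 : ‖T‖ ≤ 1 := by
    rw [hTdef, ContinuousLinearMap.norm_smulRight_apply, innerSL_apply_norm]
    exact mul_le_one₀ hηn (norm_nonneg _) hζn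
  -- T belongs to the nest algebra of 𝒩
  have hTmem : T ∈ nestAlg 𝒩 := by
    intro Q' hQ'
    ext z
    simp only [ContinuousLinearMap.comp_apply, ContinuousLinearMap.sub_apply,
      ContinuousLinearMap.one_apply, ContinuousLinearMap.zero_apply, hTapp, map_smul]
    rcases hN.chain Q' hQ' Q hQ with hc | hc
    · -- Q' ≤ Q : inner vanishes
      have hz : Q (Q' z) = Q' z := by
        rw [← ContinuousLinearMap.comp_apply, hc]
      have : ⟪η, Q' z⟫_ℂ = 0 := by
        rw [← hz, ← sa_inner hQsa, hQη, inner_zero_left]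
      simp [this]
    · by_cases hQQ' : Q' = Q
      · subst hQQ'
        have : ⟪η, Q' z⟫_ℂ = 0 := by
          rw [← sa_inner hQsa (x := η) (y := z), hQη, inner_zero_left]
        simp [this]
      · have hcp := hsucc Q' hQ' hc hQQ'
        have hfix : Q' ζ = ζ := by
          rw [← hQpζ, ← ContinuousLinearMap.comp_apply, hcp]
        rw [hfix]
        simp
  -- lower bound on the distance from T to nestAlg 𝒨
  have hlow : ‖((1 : H →L[ℂ] H) - P) ζ‖ * ‖P η‖ ≤ Metric.infDist T (nestAlg 𝒨) := by
    by_contra hcon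
    push_neg at hcon
    rw [Metric.infDist_lt_iff hneM] at hcon
    obtain ⟨A, hA, hdA⟩ := hcon
    set u : H := P η with hudef
    set v : H := ((1 : H →L[ℂ] H) - P) ζ with hvdef
    -- key identity
    have hPu : P u = u := by rw [hudef, ← ContinuousLinearMap.comp_apply, hPid]
    have h1Pv : ((1 : H →L[ℂ] H) - P) v = v := by
      rw [hvdef, ← ContinuousLinearMap.comp_apply, h1Pid]
    have hAzero : ⟪v, A u⟫_ℂ = 0 := by
      have h1 : ⟪v, A u⟫_ℂ = ⟪ζ, (((1 : H →L[ℂ] H) - P) ∘L A ∘L P) η⟫_ℂ := by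
        rw [hvdef, hudef, sa_inner h1Psa]
        congr 1
      rw [h1, hA P hP]
      simp
    have hTval : ⟪v, T u⟫_ℂ = ((‖u‖ : ℂ) ^ 2) * ((‖v‖ : ℂ) ^ 2) := by
      rw [hTapp u, inner_smul_right]
      have h1 : ⟪η, u⟫_ℂ = (‖u‖ : ℂ) ^ 2 := by
        calc ⟪η, u⟫_ℂ = ⟪η, P u⟫_ℂ := by rw [hPu]
          _ = ⟪P η, u⟫_ℂ := (sa_inner hPsa η u).symm
          _ = ⟪u, u⟫_ℂ := by rw [← hudef]
          _ = (‖u‖ : ℂ) ^ 2 := inner_self_eq_norm_sq_to_K u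
      have h2 : ⟪v, ζ⟫_ℂ = (‖v‖ : ℂ) ^ 2 := by
        calc ⟪v, ζ⟫_ℂ = ⟪((1 : H →L[ℂ] H) - P) v, ζ⟫_ℂ := by rw [h1Pv]
          _ = ⟪v, ((1 : H →L[ℂ] H) - P) ζ⟫_ℂ := sa_inner h1Psa v ζ
          _ = ⟪v, v⟫_ℂ := by rw [← hvdef]
          _ = (‖v‖ : ℂ) ^ 2 := inner_self_eq_norm_sq_to_K v
      rw [h1, h2]
    have hkey : ⟪v, (T - A) u⟫_ℂ = ((‖u‖ : ℂ) ^ 2) * ((‖v‖ : ℂ) ^ 2) := by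
      simp only [ContinuousLinearMap.sub_apply, inner_sub_right, hAzero, sub_zero, hTval]
    have hest : ‖u‖ ^ 2 * ‖v‖ ^ 2 ≤ ‖v‖ * (‖T - A‖ * ‖u‖) := by
      have h1 : ‖u‖ ^ 2 * ‖v‖ ^ 2 = ‖⟪v, (T - A) u⟫_ℂ‖ := by
        rw [hkey]
        simp [norm_mul, mul_comm]
      rw [h1]
      calc ‖⟪v, (T - A) u⟫_ℂ‖ ≤ ‖v‖ * ‖(T - A) u‖ := norm_inner_le_norm _ _
        _ ≤ ‖v‖ * (‖T - A‖ * ‖u‖) :=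
          mul_le_mul_of_nonneg_left ((T - A).le_opNorm u) (norm_nonneg _)
    have hfin : ‖v‖ * ‖u‖ ≤ ‖T - A‖ := by
      refine sq_le_mul_aux (mul_nonneg (norm_nonneg _) (norm_nonneg _)) (norm_nonneg _) ?_
      calc (‖v‖ * ‖u‖) ^ 2 = ‖u‖ ^ 2 * ‖v‖ ^ 2 := by ring
        _ ≤ ‖v‖ * (‖T - A‖ * ‖u‖) := hest
        _ = ‖T - A‖ * (‖v‖ * ‖u‖) := by ring
    rw [dist_eq_norm] at hdA
    exact absurd hdA (not_lt.mpr hfin)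
  -- conclude
  have : ‖((1 - P) ∘L Qp) x‖ * ‖(P ∘L (1 - Q)) y‖
      = ‖((1 : H →L[ℂ] H) - P) ζ‖ * ‖P η‖ := by
    simp [hζdef, hηdef, ContinuousLinearMap.comp_apply]
  rw [this]
  exact le_trans hlow (hkk_ge T hTmem hT1)
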